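/- Let p = 1.409, q = 1/p. There is no configuration consisting of one point Y with p ≤ |Y| ≤ 1.88 and nine points X₁, …, X₉ with 1 ≤ |Xᵢ| ≤ 1.21, such that dist(Xᵢ, Xⱼ) ≥ q for all i ≠ j and dist(Y, Xᵢ) ≥ p for all i. -/

import Mathlib

set_option maxHeartbeats 1000000

open Complex in
lemma re_mul_conj_eq (z w : ℂ) :
    (z * (starRingEnd ℂ) w).re = (‖z‖ ^ 2 + ‖w‖ ^ 2 - dist z w ^ 2) / 2 := by
  rw [Complex.dist_eq, Complex.sq_norm, Complex.sq_norm, Complex.sq_norm]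
  simp [Complex.normSq_apply, Complex.mul_re, Complex.sub_re, Complex.sub_im]
  ring

lemma cos_arg_sub (z w : ℂ) (hz : z ≠ 0) (hw : w ≠ 0) :
    Real.cos (z.arg - w.arg) = (z * (starRingEnd ℂ) w).re / (‖z‖ * ‖w‖) := by
  have hz' : ‖z‖ ≠ 0 := by simpa using hz
  have hw' : ‖w‖ ≠ 0 := by simpa using hw
  rw [Real.cos_sub, Complex.cos_arg hz, Complex.cos_arg hw, Complex.sin_arg, Complex.sin_arg]
  rw [Complex.mul_re, Complex.conj_re, Complex.conj_im]
  field_simp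
  try ring

lemma sin_ub {x : ℝ} (h0 : 0 ≤ x) (h1 : x ≤ 1) :
    Real.sin x ≤ x - x ^ 3 / 6 + x ^ 4 * (5 / 96) := by
  have := Real.sin_bound (x := x) (by rw [abs_of_nonneg h0]; exact h1)
  rw [abs_of_nonneg h0] at this
  have := (abs_le.1 this).2
  have h5 : x ^ 5 ≤ x ^ 4 := by
    have := mul_le_mul_of_nonneg_right h1 (pow_nonneg h0 4)
    calc x ^ 5 = x * x ^ 4 := by ring
      _ ≤ 1 * x ^ 4 := this
      _ = x ^ 4 := by ring
  nlinarith [pow_nonneg h0 4]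

lemma cos_lb {x : ℝ} (h0 : 0 ≤ x) (h1 : x ≤ 1) :
    1 - 2 * (x - x ^ 3 / 6 + x ^ 4 * (5 / 96)) ^ 2 ≤ Real.cos (2 * x) := by
  have hub := sin_ub h0 h1
  have hpos : (0:ℝ) ≤ Real.sin x :=
    Real.sin_nonneg_of_nonneg_of_le_pi h0 (h1.trans (by linarith [Real.pi_gt_three]))
  have hsq : Real.sin x ^ 2 ≤ (x - x ^ 3 / 6 + x ^ 4 * (5 / 96)) ^ 2 :=
    pow_le_pow_left₀ hpos hub 2
  rw [Real.cos_two_mul']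
  nlinarith [Real.sin_sq_add_cos_sq x]

lemma cos_587 : (0.832 : ℝ) ≤ Real.cos 0.587 := by
  have := cos_lb (x := 0.2935) (by norm_num) (by norm_num)
  norm_num at this ⊢
  linarith

lemma cos_796 : (0.697 : ℝ) ≤ Real.cos 0.796 := by
  have := cos_lb (x := 0.398) (by norm_num) (by norm_num)
  norm_num at this ⊢
  linarith

/-- Impossible: one point Y with p ≤ |Y| ≤ 1.88 and nine points Xᵢ with
1 ≤ |Xᵢ| ≤ 1.21, pairwise X-distances ≥ q = 1/p and dist(Y, Xᵢ) ≥ p = 1.409. -/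
theorem stmt_9 (Y : EuclideanSpace ℝ (Fin 2)) (X : Fin 9 → EuclideanSpace ℝ (Fin 2))
    (hY : (1.409 : ℝ) ≤ ‖Y‖ ∧ ‖Y‖ ≤ 1.88)
    (hX : ∀ i, (1 : ℝ) ≤ ‖X i‖ ∧ ‖X i‖ ≤ 1.21)
    (hXX : ∀ i j, i ≠ j → (1 / 1.409 : ℝ) ≤ dist (X i) (X j))
    (hYX : ∀ i, (1.409 : ℝ) ≤ dist Y (X i)) : False := by
  classical
  set f : EuclideanSpace ℝ (Fin 2) → ℂ := fun v => ⟨v 0, v 1⟩ with hfdef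
  have hnorm : ∀ v, ‖(f v)‖ = ‖v‖ := by
    intro v
    rw [EuclideanSpace.norm_eq, Complex.norm_def, Complex.normSq_apply, Fin.sum_univ_two]
    congr 1
    simp only [hfdef, Real.norm_eq_abs, sq_abs]
    ring
  have hdist : ∀ u v, dist (f u) (f v) = dist u v := by
    intro u v
    rw [EuclideanSpace.dist_eq, Complex.dist_eq, Complex.norm_def, Complex.normSq_apply,
      Fin.sum_univ_two]
    congr 1
    simp only [hfdef, Complex.sub_re, Complex.sub_im, Real.dist_eq, sq_abs]
    ring
  set y : ℂ := f Y with hydef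
  set a : Fin 9 → ℂ := fun i => f (X i) with hadef
  have hay : ‖y‖ = ‖Y‖ := hnorm Y
  have haa : ∀ i, ‖(a i)‖ = ‖X i‖ := fun i => hnorm (X i)
  have hy0 : y ≠ 0 := by
    intro h
    rw [← norm_eq_zero, hay] at h
    linarith [hY.1, h.ge]
  have ha0 : ∀ i, a i ≠ 0 := by
    intro i h
    rw [← norm_eq_zero, haa i] at h
    linarith [(hX i).1, h.ge]
  set w : Fin 9 → ℂ := fun i => a i * (starRingEnd ℂ) y with hwdef
  have hw0 : ∀ i, w i ≠ 0 := fun i =>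
    mul_ne_zero (ha0 i) (by simpa using hy0)
  set t : Fin 9 → ℝ := fun i => (w i).arg with htdef
  -- cos of angle to Y is at most 0.68
  have hcosT : ∀ i, Real.cos (t i) ≤ 0.68 := by
    intro i
    have h1 : Real.cos (t i) = (w i).re / (‖(w i)‖) := Complex.cos_arg (hw0 i)
    have h2 : (w i).re = (‖X i‖ ^ 2 + ‖Y‖ ^ 2 - dist Y (X i) ^ 2) / 2 := by
      rw [hwdef]
      simp only
      rw [re_mul_conj_eq, haa i, hay, hdist]
      rw [dist_comm]
    have h3 : ‖(w i)‖ = ‖X i‖ * ‖Y‖ := by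
      rw [hwdef]; simp only [norm_mul, Complex.norm_conj, haa i, hay]
    rw [h1, h2, h3]
    have hr := hX i
    have hR := hY
    have hd := hYX i
    have hpos : (0:ℝ) < ‖X i‖ * ‖Y‖ := by nlinarith [hr.1, hR.1]
    rw [div_le_iff₀ hpos]
    nlinarith [hr.1, hr.2, hR.1, hR.2, hd, mul_nonneg (sub_nonneg.2 hr.2) (sub_nonneg.2 hR.2),
      mul_nonneg (sub_nonneg.2 hr.1) (sub_nonneg.2 hR.2),
      mul_nonneg (sub_nonneg.2 hr.2) (sub_nonneg.2 hR.1),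
      mul_nonneg (sub_nonneg.2 hr.1) (sub_nonneg.2 hR.1),
      mul_nonneg (sub_nonneg.2 hr.1) (sub_nonneg.2 hr.2),
      mul_nonneg (sub_nonneg.2 hR.1) (sub_nonneg.2 hR.2)]
  -- cos of pairwise angle is at most 0.828
  have hpair : ∀ i j, i ≠ j → Real.cos (t i - t j) ≤ 0.828 := by
    intro i j hij
    have h1 : Real.cos (t i - t j)
        = (w i * (starRingEnd ℂ) (w j)).re / (‖(w i)‖ * ‖(w j)‖) :=
      cos_arg_sub _ _ (hw0 i) (hw0 j)
    have hprod : w i * (starRingEnd ℂ) (w j)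
        = (a i * (starRingEnd ℂ) (a j)) * (Complex.normSq y : ℝ) := by
      rw [hwdef]
      simp only [map_mul, Complex.conj_conj]
      rw [← Complex.mul_conj y]
      ring
    have h2 : (w i * (starRingEnd ℂ) (w j)).re
        = (a i * (starRingEnd ℂ) (a j)).re * Complex.normSq y := by
      rw [hprod, Complex.mul_re]
      simp
    have h3 : ‖(w i)‖ * ‖(w j)‖
        = ‖(a i)‖ * ‖(a j)‖ * Complex.normSq y := by
      rw [hwdef]
      simp only [norm_mul, Complex.norm_conj]
      rw [← Complex.sq_norm y]
      ring
    have hns : (0:ℝ) < Complex.normSq y := by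
      rw [← Complex.sq_norm, hay]; nlinarith [hY.1]
    have h4 : Real.cos (t i - t j)
        = (a i * (starRingEnd ℂ) (a j)).re / (‖(a i)‖ * ‖(a j)‖) := by
      rw [h1, h2, h3, mul_div_mul_right _ _ (ne_of_gt hns)]
    have h5 : (a i * (starRingEnd ℂ) (a j)).re
        = (‖X i‖ ^ 2 + ‖X j‖ ^ 2 - dist (X i) (X j) ^ 2) / 2 := by
      rw [re_mul_conj_eq, haa i, haa j, hdist]
    rw [h4, h5, haa i, haa j]
    have hri := hX i
    have hrj := hX j
    have hd := hXX i j hij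
    have hpos : (0:ℝ) < ‖X i‖ * ‖X j‖ := by nlinarith [hri.1, hrj.1]
    rw [div_le_iff₀ hpos]
    nlinarith [hri.1, hri.2, hrj.1, hrj.2, hd,
      mul_nonneg (sub_nonneg.2 hri.2) (sub_nonneg.2 hrj.2),
      mul_nonneg (sub_nonneg.2 hri.1) (sub_nonneg.2 hrj.2),
      mul_nonneg (sub_nonneg.2 hri.2) (sub_nonneg.2 hrj.1),
      mul_nonneg (sub_nonneg.2 hri.1) (sub_nonneg.2 hrj.1),
      mul_nonneg (sub_nonneg.2 hri.1) (sub_nonneg.2 hri.2),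
      mul_nonneg (sub_nonneg.2 hrj.1) (sub_nonneg.2 hrj.2)]
  -- |t i| ≥ 0.796
  have hT : ∀ i, (0.796 : ℝ) ≤ |t i| := by
    intro i
    by_contra h
    push_neg at h
    have hlt : Real.cos 0.796 < Real.cos |t i| :=
      Real.cos_lt_cos_of_nonneg_of_le_pi (abs_nonneg _)
        (by linarith [Real.pi_gt_three]) h
    rw [Real.cos_abs] at hlt
    linarith [hcosT i, cos_796]
  -- lifted angles
  set s : Fin 9 → ℝ := fun i => if t i < 0 then t i + 2 * Real.pi else t i with hsdef
  have hsif : ∀ i, s i = if t i < 0 then t i + 2 * Real.pi else t i := fun i => rfl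
  have htpi : ∀ i, |t i| ≤ Real.pi := fun i => Complex.abs_arg_le_pi _
  have hs_lb : ∀ i, (0.796 : ℝ) ≤ s i := by
    intro i
    rw [hsif i]
    split_ifs with h
    · have h1 : t i ≤ -(0.796) := by
        rcases abs_cases (t i) with ⟨he, _⟩ | ⟨he, _⟩
        · linarith [hT i]
        · linarith [hT i]
      have := (abs_le.1 (htpi i)).1
      linarith [Real.pi_gt_three]
    · push_neg at h
      rcases abs_cases (t i) with ⟨he, _⟩ | ⟨he, _⟩
      · linarith [hT i]
      · linarith [hT i]
  have hs_ub : ∀ i, s i ≤ 2 * Real.pi - 0.796 := by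
    intro i
    rw [hsif i]
    split_ifs with h
    · have h1 : t i ≤ -(0.796) := by
        rcases abs_cases (t i) with ⟨he, _⟩ | ⟨he, _⟩
        · linarith [hT i]
        · linarith [hT i]
      linarith
    · have := (abs_le.1 (htpi i)).2
      linarith [Real.pi_gt_three]
  have hcos_s : ∀ i j, Real.cos (s i - s j) = Real.cos (t i - t j) := by
    intro i j
    rw [hsif i, hsif j]
    split_ifs with hi hj hj
    · congr 1; ring
    · have : t i + 2 * Real.pi - t j = (t i - t j) + 2 * Real.pi := by ring
      rw [this, Real.cos_add_two_pi]
    · have : t i - (t j + 2 * Real.pi) = (t i - t j) - 2 * Real.pi := by ring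
      rw [this, Real.cos_sub_two_pi]
    · rfl
  -- pairwise gaps at least 0.587
  have hgap : ∀ i j, i ≠ j → (0.587 : ℝ) ≤ |s i - s j| := by
    intro i j hij
    by_contra h
    push_neg at h
    have hlt : Real.cos 0.587 < Real.cos |s i - s j| :=
      Real.cos_lt_cos_of_nonneg_of_le_pi (abs_nonneg _)
        (by linarith [Real.pi_gt_three]) h
    rw [Real.cos_abs, hcos_s] at hlt
    linarith [hpair i j hij, cos_587]
  -- sort
  set σ : Equiv.Perm (Fin 9) := Tuple.sort s with hσ
  set g : Fin 9 → ℝ := s ∘ σ with hg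
  have hmono : Monotone g := Tuple.monotone_sort s
  have hadj : ∀ k l : Fin 9, k < l → g k + 0.587 ≤ g l := by
    intro k l hkl
    have hne : σ k ≠ σ l := fun h => absurd (σ.injective h) (ne_of_lt hkl)
    have h1 := hgap (σ k) (σ l) hne
    have h2 : g k ≤ g l := hmono (le_of_lt hkl)
    have hgk : g k = s (σ k) := rfl
    have hgl : g l = s (σ l) := rfl
    have habs : |s (σ k) - s (σ l)| = s (σ l) - s (σ k) := by
      rw [abs_sub_comm, abs_of_nonneg]
      rw [← hgk, ← hgl]
      exact sub_nonneg.2 h2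
    rw [habs] at h1
    linarith
  have h01 := hadj 0 1 (by decide)
  have h12 := hadj 1 2 (by decide)
  have h23 := hadj 2 3 (by decide)
  have h34 := hadj 3 4 (by decide)
  have h45 := hadj 4 5 (by decide)
  have h56 := hadj 5 6 (by decide)
  have h67 := hadj 6 7 (by decide)
  have h78 := hadj 7 8 (by decide)
  have hlo : (0.796 : ℝ) ≤ g 0 := hs_lb (σ 0)
  have hhi : g 8 ≤ 2 * Real.pi - 0.796 := hs_ub (σ 8)
  have hpi : Real.pi < 3.141593 := Real.pi_lt_d6
  linarith
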